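/- Let A be a 4×4 complex matrix. If A and A* have a common eigenvector, then A is unitarily tridiagonalisable. -/

import Mathlib

open Matrix

/-- A matrix is tridiagonal if all entries with |i-j| ≥ 2 vanish. -/
def IsTridiagonal {n : ℕ} (B : Matrix (Fin n) (Fin n) ℂ) : Prop :=
  ∀ i j : Fin n, 2 ≤ |(i : ℤ) - (j : ℤ)| → B i j = 0

/-- A is unitarily tridiagonalisable. -/
def IsUnitarilyTridiagonalisable {n : ℕ} (A : Matrix (Fin n) (Fin n) ℂ) : Prop :=
  ∃ U ∈ Matrix.unitaryGroup (Fin n) ℂ, IsTridiagonal (U * A * Uᴴ)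

theorem tridiagonalisable_of_common_eigenvector
    (h3 : ∀ B : Matrix (Fin 3) (Fin 3) ℂ, IsUnitarilyTridiagonalisable B)
    (A : Matrix (Fin 4) (Fin 4) ℂ)
    (hcommon : ∃ v : Fin 4 → ℂ, v ≠ 0 ∧ (∃ μ : ℂ, A.mulVec v = μ • v) ∧
      (∃ ν : ℂ, Aᴴ.mulVec v = ν • v)) :
    IsUnitarilyTridiagonalisable A := by
  classical
  obtain ⟨v, hv0, ⟨μ, hμ⟩, ⟨ν, hν⟩⟩ := hcommon
  -- normalized common eigenvector in EuclideanSpace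
  set vE : EuclideanSpace ℂ (Fin 4) := WithLp.toLp 2 v with hvE
  have hvE0 : vE ≠ 0 := by
    rw [hvE]; intro h; apply hv0; simpa using congrArg WithLp.ofLp h
  set r : ℝ := ‖vE‖ with hr
  have hr0 : r ≠ 0 := norm_ne_zero_iff.mpr hvE0
  set cc : ℂ := (r : ℂ)⁻¹ with hcc
  set uE : EuclideanSpace ℂ (Fin 4) := cc • vE with huE
  have hnu : ‖uE‖ = 1 := by
    rw [huE, norm_smul, hcc, norm_inv, Complex.norm_real, Real.norm_eq_abs,
      abs_of_nonneg (norm_nonneg _)]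
    field_simp
  -- orthonormal basis extending uE
  have hon : Orthonormal ℂ (({0} : Set (Fin 4)).restrict (fun _ : Fin 4 => uE)) := by
    rw [orthonormal_iff_ite]
    intro i j
    have hij : i = j := Subsingleton.elim i j
    subst hij
    simp only [Set.restrict_apply, if_pos rfl]
    rw [inner_self_eq_norm_sq_to_K]; change ((‖uE‖ : ℝ) : ℂ) ^ 2 = _; rw [hnu]
    norm_num
  obtain ⟨b, hb⟩ := hon.exists_orthonormalBasis_extension_of_card_eq
    (by simp [finrank_euclideanSpace])
  have hb0 : b 0 = uE := hb 0 (by simp)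
  have hb0j : ∀ j, b 0 j = cc * v j := by
    intro j
    rw [hb0]
    simp [huE, hvE, PiLp.smul_apply, smul_eq_mul]
  have hbo := b.orthonormal
  rw [orthonormal_iff_ite] at hbo
  have hinner : ∀ i k : Fin 4, ∑ j, (starRingEnd ℂ) (b i j) * b k j
      = if i = k then 1 else 0 := by
    intro i k
    have h := hbo i k
    rw [PiLp.inner_apply] at h
    simpa [RCLike.inner_apply, mul_comm] using h
  -- the first unitary
  set U : Matrix (Fin 4) (Fin 4) ℂ := Matrix.of fun i j => (starRingEnd ℂ) (b i j) with hUdef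
  have hU : U ∈ Matrix.unitaryGroup (Fin 4) ℂ := by
    rw [Matrix.mem_unitaryGroup_iff]
    ext i k
    rw [Matrix.star_eq_conjTranspose, Matrix.mul_apply, Matrix.one_apply]
    simp only [hUdef, Matrix.conjTranspose_apply, Matrix.of_apply, RCLike.star_def,
      Complex.conj_conj]
    exact hinner i k
  set M : Matrix (Fin 4) (Fin 4) ℂ := U * A * Uᴴ with hMdef
  have hMentry : ∀ i k, M i k
      = ∑ j, ∑ l, (starRingEnd ℂ) (b i j) * (A j l * b k l) := by
    intro i k
    rw [hMdef]
    simp only [Matrix.mul_apply, hUdef, Matrix.conjTranspose_apply, Matrix.of_apply,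
      RCLike.star_def, Complex.conj_conj]
    simp_rw [Finset.sum_mul, mul_assoc]
    rw [Finset.sum_comm]
  -- eigen facts pointwise
  have hA0 : ∀ j, ∑ l, A j l * b 0 l = μ * b 0 j := by
    intro j
    have h1 : (A.mulVec v) j = μ * v j := by rw [hμ]; simp
    simp_rw [hb0j]
    calc ∑ l, A j l * (cc * v l) = cc * ∑ l, A j l * v l := by
          rw [Finset.mul_sum]; apply Finset.sum_congr rfl; intros; ring
      _ = cc * (μ * v j) := by rw [← h1]; rfl
      _ = μ * (cc * v j) := by ring
  have hAstar : ∀ l, ∑ j, (starRingEnd ℂ) (b 0 j) * A j l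
      = (starRingEnd ℂ) ν * (starRingEnd ℂ) (b 0 l) := by
    intro l
    have h1 : (Aᴴ.mulVec v) l = ν * v l := by rw [hν]; simp
    have h2 : (Aᴴ.mulVec v) l = ∑ j, (starRingEnd ℂ) (A j l) * v j := by
      simp [Matrix.mulVec, dotProduct, Matrix.conjTranspose_apply]
    have h3 : ∑ j, (starRingEnd ℂ) (v j) * A j l
        = (starRingEnd ℂ) ν * (starRingEnd ℂ) (v l) := by
      have h5 := congrArg (starRingEnd ℂ) (h2.symm.trans h1)
      rw [map_sum] at h5
      simp only [_root_.map_mul, Complex.conj_conj] at h5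
      rw [← h5]
      apply Finset.sum_congr rfl; intros; ring
    simp_rw [hb0j, _root_.map_mul]
    calc ∑ j, (starRingEnd ℂ) cc * (starRingEnd ℂ) (v j) * A j l
        = (starRingEnd ℂ) cc * ∑ j, (starRingEnd ℂ) (v j) * A j l := by
          rw [Finset.mul_sum]; apply Finset.sum_congr rfl; intros; ring
      _ = (starRingEnd ℂ) cc * ((starRingEnd ℂ) ν * (starRingEnd ℂ) (v l)) := by rw [h3]
      _ = (starRingEnd ℂ) ν * ((starRingEnd ℂ) cc * (starRingEnd ℂ) (v l)) := by ring
  -- first row and column of M vanish off the corner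
  have hMcol : ∀ i : Fin 4, i ≠ 0 → M i 0 = 0 := by
    intro i hi
    rw [hMentry]
    calc ∑ j, ∑ l, (starRingEnd ℂ) (b i j) * (A j l * b 0 l)
        = ∑ j, (starRingEnd ℂ) (b i j) * (μ * b 0 j) := by
          apply Finset.sum_congr rfl; intro j _
          rw [← Finset.mul_sum, hA0]
      _ = μ * ∑ j, (starRingEnd ℂ) (b i j) * b 0 j := by
          rw [Finset.mul_sum]; apply Finset.sum_congr rfl; intros; ring
      _ = 0 := by rw [hinner, if_neg hi, mul_zero]
  have hMrow : ∀ k : Fin 4, k ≠ 0 → M 0 k = 0 := by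
    intro k hk
    rw [hMentry]
    rw [Finset.sum_comm]
    calc ∑ l, ∑ j, (starRingEnd ℂ) (b 0 j) * (A j l * b k l)
        = ∑ l, ((starRingEnd ℂ) ν * (starRingEnd ℂ) (b 0 l)) * b k l := by
          apply Finset.sum_congr rfl; intro l _
          rw [← hAstar l, Finset.sum_mul]
          apply Finset.sum_congr rfl; intros; ring
      _ = (starRingEnd ℂ) ν * ∑ l, (starRingEnd ℂ) (b 0 l) * b k l := by
          rw [Finset.mul_sum]; apply Finset.sum_congr rfl; intros; ring
      _ = 0 := by rw [hinner, if_neg (Ne.symm hk), mul_zero]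
  -- block decomposition
  set e : Fin 1 ⊕ Fin 3 ≃ Fin 4 := finSumFinEquiv with he
  set M' : Matrix (Fin 1 ⊕ Fin 3) (Fin 1 ⊕ Fin 3) ℂ := M.submatrix e e with hM'
  have hM'12 : M'.toBlocks₁₂ = 0 := by
    ext i j
    have : e (Sum.inr j) ≠ 0 := by
      intro h
      have h2 : (e (Sum.inr j)).val = 0 := by rw [h]; rfl
      have h3 : (e (Sum.inr j)).val = 1 + (j : ℕ) := rfl
      omega
    have hi : i = 0 := Subsingleton.elim i 0
    subst hi
    have he0 : e (Sum.inl (0 : Fin 1)) = 0 := by rw [he]; rfl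
    simpa [Matrix.toBlocks₁₂, hM', Matrix.submatrix_apply, he0] using hMrow _ this
  have hM'21 : M'.toBlocks₂₁ = 0 := by
    ext i j
    have : e (Sum.inr i) ≠ 0 := by
      intro h
      have h2 : (e (Sum.inr i)).val = 0 := by rw [h]; rfl
      have h3 : (e (Sum.inr i)).val = 1 + (i : ℕ) := rfl
      omega
    have hj : j = 0 := Subsingleton.elim j 0
    subst hj
    have he0 : e (Sum.inl (0 : Fin 1)) = 0 := by rw [he]; rfl
    simpa [Matrix.toBlocks₂₁, hM', Matrix.submatrix_apply, he0] using hMcol _ this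
  set B : Matrix (Fin 3) (Fin 3) ℂ := M'.toBlocks₂₂ with hB
  obtain ⟨V, hV, hVT⟩ := h3 B
  set W' : Matrix (Fin 1 ⊕ Fin 3) (Fin 1 ⊕ Fin 3) ℂ :=
    Matrix.fromBlocks 1 0 0 V with hW'
  set W : Matrix (Fin 4) (Fin 4) ℂ := W'.submatrix e.symm e.symm with hW
  have hWu : W ∈ Matrix.unitaryGroup (Fin 4) ℂ := by
    rw [Matrix.mem_unitaryGroup_iff]
    have hVu : V * Vᴴ = 1 := by
      have := (Matrix.mem_unitaryGroup_iff).mp hV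
      rwa [Matrix.star_eq_conjTranspose] at this
    rw [hW, Matrix.star_eq_conjTranspose, Matrix.conjTranspose_submatrix,
      Matrix.submatrix_mul_equiv]
    rw [hW', Matrix.fromBlocks_conjTranspose, Matrix.fromBlocks_multiply]
    simp [hVu]
  refine ⟨W * U, mul_mem hWu hU, ?_⟩
  have hM'blocks : M' = Matrix.fromBlocks M'.toBlocks₁₁ 0 0 B := by
    conv_lhs => rw [← Matrix.fromBlocks_toBlocks M']
    rw [hM'12, hM'21, hB]
  have hMeq : M = M'.submatrix e.symm e.symm := by
    rw [hM', Matrix.submatrix_submatrix]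
    simp
  have key : (W * U) * A * (W * U)ᴴ
      = (Matrix.fromBlocks M'.toBlocks₁₁ 0 0 (V * B * Vᴴ)).submatrix e.symm e.symm := by
    have h1 : (W * U) * A * (W * U)ᴴ = W * M * Wᴴ := by
      rw [hMdef, Matrix.conjTranspose_mul]
      simp only [Matrix.mul_assoc]
    rw [h1, hMeq, hW, Matrix.conjTranspose_submatrix,
      Matrix.submatrix_mul_equiv, Matrix.submatrix_mul_equiv]
    rw [hM'blocks, hW', Matrix.fromBlocks_conjTranspose, Matrix.fromBlocks_multiply,
      Matrix.fromBlocks_multiply]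
    simp
  rw [key]
  intro i j hij
  rcases hei : e.symm i with a | a <;> rcases hej : e.symm j with c | c
  · exfalso
    have : i = j := by
      have : e.symm i = e.symm j := by
        rw [hei, hej]
        congr 1
        exact Subsingleton.elim a c
      exact e.symm.injective this
    subst this
    simp only [sub_self, abs_zero] at hij
    exact absurd hij (by norm_num)
  · rw [Matrix.submatrix_apply, hei, hej]
    simp [Matrix.fromBlocks_apply₁₂]
  · rw [Matrix.submatrix_apply, hei, hej]
    simp [Matrix.fromBlocks_apply₂₁]
  · have hi : (i : ℕ) = 1 + (a : ℕ) := by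
      have h4 : i = e (Sum.inr a) := by rw [← hei]; simp
      rw [h4]; rfl
    have hj : (j : ℕ) = 1 + (c : ℕ) := by
      have h4 : j = e (Sum.inr c) := by rw [← hej]; simp
      rw [h4]; rfl
    have habs : 2 ≤ |(a : ℤ) - (c : ℤ)| := by
      have h5 : (i : ℤ) - (j : ℤ) = (a : ℤ) - (c : ℤ) := by
        have h6 : ((i : ℕ) : ℤ) = 1 + ((a : ℕ) : ℤ) := by exact_mod_cast hi
        have h7 : ((j : ℕ) : ℤ) = 1 + ((c : ℕ) : ℤ) := by exact_mod_cast hj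
        omega
      rwa [h5] at hij
    rw [Matrix.submatrix_apply, hei, hej]
    exact hVT a c habs
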